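/- Let P be a normal logic program and 𝔄_P = (A_P, Att_P) its associated SETAF. Then a labelling L is a preferred labelling of 𝔄_P if and only if L2I_P(L) is a regular model of P. -/

import Mathlib

/-- A rule of a normal logic program:
`head ← bodyPos, not bodyNeg`. -/
structure Rule (α : Type) where
  head : α
  bodyPos : Finset α
  bodyNeg : Finset α
deriving DecidableEq

/-- A normal logic program (NLP): a finite set of rules. -/
abbrev NLP (α : Type) := Finset (Rule α)

variable {α : Type} [DecidableEq α]

/-- The atoms occurring in a rule. -/
def Rule.atoms (r : Rule α) : Finset α :=
  insert r.head (r.bodyPos ∪ r.bodyNeg)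

/-- The Herbrand base of a program: all atoms occurring in it. -/
def HB (P : NLP α) : Finset α := P.sup Rule.atoms

/-- A three-valued interpretation, given by its sets of true and false atoms. -/
structure Interp (α : Type) where
  T : Set α
  F : Set α

/-- `I` is a 3-valued interpretation over the Herbrand base `H`. -/
def IsInterp (H : Finset α) (I : Interp α) : Prop :=
  I.T ⊆ ↑H ∧ I.F ⊆ ↑H ∧ Disjoint I.T I.F

/-- A rule of a positive program obtained as a reduct; `hasU` records whether
the special atom `u` (undefined in every interpretation) occurs in its body. -/
structure PosRule (α : Type) where
  head : α
  bodyPos : Finset α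
  hasU : Prop

/-- The reduct `P/I`: delete every rule whose negative body meets `I.T`,
delete each `not b` with `b ∈ I.F`, and replace the remaining negative
literals by the special atom `u`. -/
def reduct (P : NLP α) (I : Interp α) : Set (PosRule α) :=
  { q | ∃ r ∈ P, (∀ b ∈ r.bodyNeg, b ∉ I.T) ∧
        q.head = r.head ∧ q.bodyPos = r.bodyPos ∧
        (q.hasU ↔ ∃ b ∈ r.bodyNeg, b ∉ I.F) }

/-- The `Ψ` operator of a positive program `Q` relative to the Herbrand base
`H`; the special atom `u` is neither true nor false in any interpretation. -/
def PsiOp (H : Finset α) (Q : Set (PosRule α)) (J : Interp α) : Interp α where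
  T := { c | c ∈ H ∧ ∃ q ∈ Q, q.head = c ∧ ¬ q.hasU ∧ ∀ a ∈ q.bodyPos, a ∈ J.T }
  F := { c | c ∈ H ∧ ∀ q ∈ Q, q.head = c → ∃ a ∈ q.bodyPos, a ∈ J.F }

/-- Iteration of `Ψ` starting from `⟨∅, H⟩`. -/
def PsiIter (H : Finset α) (Q : Set (PosRule α)) : ℕ → Interp α
  | 0 => ⟨∅, ↑H⟩
  | n + 1 => PsiOp H Q (PsiIter H Q n)

/-- `Ω_P(I)`: the least three-valued model of the reduct `P/I`,
obtained as the `ω`-iteration of `Ψ`. -/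
def OmegaOp (H : Finset α) (P : NLP α) (I : Interp α) : Interp α where
  T := ⋃ n, (PsiIter H (reduct P I) n).T
  F := ⋂ n, (PsiIter H (reduct P I) n).F

/-- `I` is a partial stable model of `P` (over Herbrand base `H`). -/
def IsPSModel (H : Finset α) (P : NLP α) (I : Interp α) : Prop :=
  IsInterp H I ∧ OmegaOp H P I = I

/-- Well-founded model: a partial stable model with `⊆`-minimal true part. -/
def IsWFModel (H : Finset α) (P : NLP α) (I : Interp α) : Prop :=
  IsPSModel H P I ∧ ∀ J, IsPSModel H P J → ¬ J.T ⊂ I.T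

/-- Regular model: a partial stable model with `⊆`-maximal true part. -/
def IsRegularModel (H : Finset α) (P : NLP α) (I : Interp α) : Prop :=
  IsPSModel H P I ∧ ∀ J, IsPSModel H P J → ¬ I.T ⊂ J.T

/-- Stable model: a partial stable model with `T ∪ F = H`. -/
def IsStableModel (H : Finset α) (P : NLP α) (I : Interp α) : Prop :=
  IsPSModel H P I ∧ I.T ∪ I.F = ↑H

/-- L-stable model: a partial stable model with `⊆`-maximal `T ∪ F`. -/
def IsLStableModel (H : Finset α) (P : NLP α) (I : Interp α) : Prop :=
  IsPSModel H P I ∧ ∀ J, IsPSModel H P J → ¬ (I.T ∪ I.F) ⊂ (J.T ∪ J.F)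

/-- `IsStatement P c V R`: there is a statement of `P` with conclusion `c`,
vulnerabilities `V` and rules `R`.  A statement is built from a rule
`r = c ← a₁,…,a_m, not b₁,…,not b_n ∈ P` together with statements `sᵢ` for the
positive body atoms `aᵢ` (with `r` not among their rules); its vulnerabilities
are `Vul(s₁) ∪ … ∪ Vul(s_m) ∪ {b₁,…,b_n}` and its rules are
`Rules(s₁) ∪ … ∪ Rules(s_m) ∪ {r}`. -/
inductive IsStatement (P : NLP α) : α → Finset α → Finset (Rule α) → Prop where
  | mk (r : Rule α) (hr : r ∈ P) (v : α → Finset α) (ρ : α → Finset (Rule α))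
      (hsub : ∀ a ∈ r.bodyPos, IsStatement P a (v a) (ρ a))
      (hnr : ∀ a ∈ r.bodyPos, r ∉ ρ a) :
      IsStatement P r.head (r.bodyPos.biUnion v ∪ r.bodyNeg)
        (insert r (r.bodyPos.biUnion ρ))

/-- `c` is an argument of `P`: it is the conclusion of some statement. -/
def IsArg (P : NLP α) (c : α) : Prop := ∃ V R, IsStatement P c V R

open Classical in
/-- The set `A_P` of arguments of `P`. -/
noncomputable def argsOf (P : NLP α) : Finset α := (HB P).filter (IsArg P)

/-- `B` meets every vulnerability set of `a` in `P`. -/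
def HitsVul (P : NLP α) (B : Finset α) (a : α) : Prop :=
  ∀ V R, IsStatement P a V R → ∃ b ∈ B, b ∈ V

/-- A SETAF: a finite set of arguments and an attack relation between
finite sets of arguments and arguments. -/
structure SETAF (α : Type) where
  args : Finset α
  att : Finset α → α → Prop

/-- Well-formedness of a SETAF: attackers are nonempty sets of arguments
attacking arguments, and attacking sets are `⊆`-minimal. -/
def SETAF.Wf (S : SETAF α) : Prop :=
  (∀ B a, S.att B a → B.Nonempty ∧ B ⊆ S.args ∧ a ∈ S.args) ∧
  (∀ B a, S.att B a → ∀ B', B' ⊂ B → ¬ S.att B' a)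

/-- The SETAF `𝔄_P` associated with an NLP `P`: its arguments are the
conclusions of the statements of `P`, and `B` attacks `a` iff `B` is a
`⊆`-minimal set of arguments meeting every vulnerability set of `a`. -/
noncomputable def setafOf (P : NLP α) : SETAF α where
  args := argsOf P
  att := fun B a =>
    B ⊆ argsOf P ∧ a ∈ argsOf P ∧ HitsVul P B a ∧ ∀ B', B' ⊂ B → ¬ HitsVul P B' a

/-- Labels for arguments. -/
inductive Lab : Type
  | inn | out | und
deriving DecidableEq

/-- `in(L)`. -/
def labIn (S : SETAF α) (L : α → Lab) : Set α := { a | a ∈ S.args ∧ L a = Lab.inn }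

/-- `out(L)`. -/
def labOut (S : SETAF α) (L : α → Lab) : Set α := { a | a ∈ S.args ∧ L a = Lab.out }

/-- `undec(L)`. -/
def labUnd (S : SETAF α) (L : α → Lab) : Set α := { a | a ∈ S.args ∧ L a = Lab.und }

/-- Admissible labelling. -/
def AdmissibleLab (S : SETAF α) (L : α → Lab) : Prop :=
  ∀ a ∈ S.args,
    (L a = Lab.inn → ∀ B, S.att B a → ∃ b ∈ B, L b = Lab.out) ∧
    (L a = Lab.out → ∃ B, S.att B a ∧ ∀ b ∈ B, L b = Lab.inn)

/-- Complete labelling. -/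
def CompleteLab (S : SETAF α) (L : α → Lab) : Prop :=
  AdmissibleLab S L ∧
  ∀ a ∈ S.args, L a = Lab.und →
    (∃ B, S.att B a ∧ ∀ b ∈ B, L b ≠ Lab.out) ∧
    (∀ B, S.att B a → ∃ b ∈ B, L b ≠ Lab.inn)

/-- Grounded labelling: complete with `⊆`-minimal `in(L)`. -/
def GroundedLab (S : SETAF α) (L : α → Lab) : Prop :=
  CompleteLab S L ∧ ∀ L', CompleteLab S L' → ¬ labIn S L' ⊂ labIn S L

/-- Preferred labelling: complete with `⊆`-maximal `in(L)`. -/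
def PreferredLab (S : SETAF α) (L : α → Lab) : Prop :=
  CompleteLab S L ∧ ∀ L', CompleteLab S L' → ¬ labIn S L ⊂ labIn S L'

/-- Stable labelling: complete with `undec(L) = ∅`. -/
def StableLab (S : SETAF α) (L : α → Lab) : Prop :=
  CompleteLab S L ∧ labUnd S L = ∅

/-- Semi-stable labelling: complete with `⊆`-minimal `undec(L)`. -/
def SemiStableLab (S : SETAF α) (L : α → Lab) : Prop :=
  CompleteLab S L ∧ ∀ L', CompleteLab S L' → ¬ labUnd S L' ⊂ labUnd S L

/-- `L2I_P`: the interpretation associated with a labelling of `𝔄_P`. -/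
def L2I (P : NLP α) (L : α → Lab) : Interp α where
  T := { c | c ∈ HB P ∧ c ∈ argsOf P ∧ L c = Lab.inn }
  F := { c | c ∈ HB P ∧ (c ∉ argsOf P ∨ (c ∈ argsOf P ∧ L c = Lab.out)) }

open Classical in
/-- `I2L`: the labelling associated with an interpretation (meaningful on
the arguments). -/
noncomputable def I2L (I : Interp α) : α → Lab := fun c =>
  if c ∈ I.T then Lab.inn else if c ∈ I.F then Lab.out else Lab.und

/-- `L2I_𝔄`: the interpretation `⟨in(L), out(L)⟩` associated with a labelling
of a SETAF `𝔄`. -/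
def L2Iset (S : SETAF α) (L : α → Lab) : Interp α := ⟨labIn S L, labOut S L⟩

/-- `V` meets every attacker of `a` in `S`. -/
def HitsAtt (S : SETAF α) (a : α) (V : Finset α) : Prop :=
  ∀ B, S.att B a → ∃ b ∈ B, b ∈ V

/-- `V ∈ V_a`: a `⊆`-minimal set of arguments meeting every attacker of `a`. -/
def MemVa (S : SETAF α) (a : α) (V : Finset α) : Prop :=
  V ⊆ S.args ∧ HitsAtt S a V ∧ ∀ V', V' ⊂ V → ¬ HitsAtt S a V'

open Classical in
/-- The NLP `P_𝔄` associated with a SETAF `𝔄`: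
`{ a ← not b₁,…,not b_n | a ∈ A, {b₁,…,b_n} ∈ V_a }`. -/
noncomputable def nlpOf (S : SETAF α) : NLP α :=
  ((S.args ×ˢ S.args.powerset).filter (fun p => MemVa S p.1 p.2)).image
    (fun p => { head := p.1, bodyPos := ∅, bodyNeg := p.2 })

/-- Redundancy-Free Atomic Logic Program: every rule is atomic (no positive
body), every atom is a head, and no rule's negative body strictly contains
that of another rule with the same head. -/
def IsRFALP (P : NLP α) : Prop :=
  (∀ r ∈ P, r.bodyPos = ∅) ∧
  HB P = P.image Rule.head ∧
  ∀ r ∈ P, ∀ r' ∈ P, r'.head = r.head → ¬ r'.bodyNeg ⊂ r.bodyNeg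

/-- Unfolding: replace a rule `c ← a, a₁,…,a_m, not b₁,…,not b_n` by all rules
obtained by resolving `a` against the rules of the program with head `a`. -/
def StepU (P₁ P₂ : NLP α) : Prop :=
  ∃ r ∈ P₁, ∃ a ∈ r.bodyPos,
    P₂ = P₁.erase r ∪
      (P₁.filter (fun r' => r'.head = a)).image
        (fun r' => { head := r.head,
                     bodyPos := r'.bodyPos ∪ r.bodyPos.erase a,
                     bodyNeg := r'.bodyNeg ∪ r.bodyNeg })

/-- Elimination of tautologies: delete a rule whose head occurs in its
positive body. -/
def StepT (P₁ P₂ : NLP α) : Prop :=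
  ∃ r ∈ P₁, r.head ∈ r.bodyPos ∧ P₂ = P₁.erase r

/-- Positive reduction: delete a literal `not b` from the body of a rule,
where `b` is not the head of any rule of the program. -/
def StepP (P₁ P₂ : NLP α) : Prop :=
  ∃ r ∈ P₁, ∃ b ∈ r.bodyNeg, (∀ r' ∈ P₁, r'.head ≠ b) ∧
    P₂ = insert { head := r.head, bodyPos := r.bodyPos,
                  bodyNeg := r.bodyNeg.erase b } (P₁.erase r)

/-- Elimination of non-minimal rules: delete a rule subsumed by a distinct
rule with the same head and smaller bodies. -/
def StepM (P₁ P₂ : NLP α) : Prop :=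
  ∃ r ∈ P₁, ∃ r' ∈ P₁, r ≠ r' ∧ r'.head = r.head ∧
    r'.bodyPos ⊆ r.bodyPos ∧ r'.bodyNeg ⊆ r.bodyNeg ∧ P₂ = P₁.erase r

/-- `↦_UTPM`: the union of the four transformations. -/
def StepUTPM (P₁ P₂ : NLP α) : Prop :=
  StepU P₁ P₂ ∨ StepT P₁ P₂ ∨ StepP P₁ P₂ ∨ StepM P₁ P₂

/-- `P` is irreducible w.r.t. `↦_UTPM`: there is no `P' ≠ P` with
`P ↦_UTPM P'`. -/
def UTPMIrreducible (P : NLP α) : Prop :=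
  ¬ ∃ P', StepUTPM P P' ∧ P' ≠ P

section Stmt5Aux
variable {α : Type} [DecidableEq α]

lemma mem_HB_of_atoms {P : NLP α} {r : Rule α} (hr : r ∈ P) {c : α}
    (hc : c ∈ r.atoms) : c ∈ HB P :=
  Finset.le_sup (f := Rule.atoms) hr hc

lemma head_mem_HB {P : NLP α} {r : Rule α} (hr : r ∈ P) : r.head ∈ HB P :=
  mem_HB_of_atoms hr (Finset.mem_insert_self _ _)

lemma bodyPos_mem_HB {P : NLP α} {r : Rule α} (hr : r ∈ P) {a : α}
    (ha : a ∈ r.bodyPos) : a ∈ HB P :=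
  mem_HB_of_atoms hr (by simp [Rule.atoms, ha])

lemma bodyNeg_mem_HB {P : NLP α} {r : Rule α} (hr : r ∈ P) {a : α}
    (ha : a ∈ r.bodyNeg) : a ∈ HB P :=
  mem_HB_of_atoms hr (by simp [Rule.atoms, ha])

lemma IsStatement.conc_mem_HB {P : NLP α} {c : α} {V : Finset α} {R : Finset (Rule α)}
    (h : IsStatement P c V R) : c ∈ HB P := by
  cases h with
  | mk r hr v ρ hsub hnr => exact head_mem_HB hr

lemma IsStatement.vul_mem_HB {P : NLP α} {c : α} {V : Finset α} {R : Finset (Rule α)}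
    (h : IsStatement P c V R) : ∀ b ∈ V, b ∈ HB P := by
  induction h with
  | mk r hr v ρ hsub hnr ih =>
    intro b hb
    rcases Finset.mem_union.1 hb with hb | hb
    · rcases Finset.mem_biUnion.1 hb with ⟨a, ha, hba⟩
      exact ih a ha b hba
    · exact bodyNeg_mem_HB hr hb

lemma IsStatement.sub {P : NLP α} {c : α} {V : Finset α} {R : Finset (Rule α)}
    (h : IsStatement P c V R) :
    ∀ r ∈ R, ∃ V' R', V' ⊆ V ∧ IsStatement P r.head V' R' := by
  induction h with
  | mk r0 hr0 v ρ hsub hnr ih =>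
    intro r hrR
    rcases Finset.mem_insert.1 hrR with rfl | hrR
    · exact ⟨_, _, subset_rfl, IsStatement.mk _ hr0 v ρ hsub hnr⟩
    · rcases Finset.mem_biUnion.1 hrR with ⟨a, ha, hra⟩
      rcases ih a ha r hra with ⟨V', R', hV', hst⟩
      exact ⟨V', R', hV'.trans ((Finset.subset_biUnion_of_mem v ha).trans
        Finset.subset_union_left), hst⟩

end Stmt5Aux
section Stmt5Aux2
set_option linter.unusedSectionVars false
variable {α : Type} [DecidableEq α]

open Classical in
lemma exists_min_hitter (P : NLP α) (a : α) (C : Finset α) (hC : HitsVul P C a) :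
    ∃ B, B ⊆ C ∧ HitsVul P B a ∧ ∀ B', B' ⊂ B → ¬ HitsVul P B' a := by
  classical
  have hne : (C.powerset.filter (fun B => HitsVul P B a)).Nonempty :=
    ⟨C, by simp [Finset.mem_powerset, hC]⟩
  obtain ⟨B, hB, hmin'⟩ := Finset.exists_minimal hne
  have hmin : ∀ x ∈ C.powerset.filter (fun B => HitsVul P B a), ¬ x < B :=
    fun x hx hlt => lt_irrefl _ (lt_of_lt_of_le hlt (hmin' hx hlt.le))
  rw [Finset.mem_filter, Finset.mem_powerset] at hB
  refine ⟨B, hB.1, hB.2, fun B' hB' hhit => ?_⟩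
  refine hmin B' ?_ hB'
  rw [Finset.mem_filter, Finset.mem_powerset]
  exact ⟨(hB'.subset).trans hB.1, hhit⟩

lemma psiOp_T_mono {H : Finset α} {Q : Set (PosRule α)} {J K : Interp α}
    (h : J.T ⊆ K.T) : (PsiOp H Q J).T ⊆ (PsiOp H Q K).T := by
  rintro c ⟨hc, q, hq, h1, h2, h3⟩
  exact ⟨hc, q, hq, h1, h2, fun a ha => h (h3 a ha)⟩

lemma psiOp_F_mono {H : Finset α} {Q : Set (PosRule α)} {J K : Interp α}
    (h : J.F ⊆ K.F) : (PsiOp H Q J).F ⊆ (PsiOp H Q K).F := by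
  rintro c ⟨hc, hall⟩
  refine ⟨hc, fun q hq hh => ?_⟩
  obtain ⟨x, hx1, hx2⟩ := hall q hq hh
  exact ⟨x, hx1, h hx2⟩

lemma psiIter_T_mono (H : Finset α) (Q : Set (PosRule α)) :
    ∀ {m n : ℕ}, m ≤ n → (PsiIter H Q m).T ⊆ (PsiIter H Q n).T := by
  have step : ∀ n, (PsiIter H Q n).T ⊆ (PsiIter H Q (n+1)).T ∧
      (PsiIter H Q (n+1)).F ⊆ (PsiIter H Q n).F := by
    intro n
    induction n with
    | zero =>
      constructor
      · intro c hc; exact absurd hc (by simp [PsiIter])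
      · rintro c ⟨hc, _⟩; exact hc
    | succ n ih => exact ⟨psiOp_T_mono ih.1, psiOp_F_mono ih.2⟩
  intro m n hmn
  induction hmn with
  | refl => exact subset_rfl
  | step h ih => exact ih.trans (step _).1

lemma psiIter_F_anti (H : Finset α) (Q : Set (PosRule α)) :
    ∀ {m n : ℕ}, m ≤ n → (PsiIter H Q n).F ⊆ (PsiIter H Q m).F := by
  have step : ∀ n, (PsiIter H Q (n+1)).F ⊆ (PsiIter H Q n).F := by
    intro n
    induction n with
    | zero => rintro c ⟨hc, _⟩; exact hc
    | succ n ih => exact psiOp_F_mono ih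
  intro m n hmn
  induction hmn with
  | refl => exact subset_rfl
  | step h ih => exact (step _).trans ih

lemma finset_bound {s : Finset α} {p : α → ℕ → Prop}
    (hmono : ∀ a m n, m ≤ n → p a m → p a n)
    (h : ∀ a ∈ s, ∃ n, p a n) : ∃ N, ∀ a ∈ s, p a N := by
  classical
  induction s using Finset.induction with
  | empty => exact ⟨0, by simp⟩
  | @insert x s hx ih =>
    obtain ⟨N, hN⟩ := ih (fun a ha => h a (Finset.mem_insert_of_mem ha))
    obtain ⟨M, hM⟩ := h x (Finset.mem_insert_self _ _)
    refine ⟨max N M, fun a ha => ?_⟩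
    rcases Finset.mem_insert.1 ha with rfl | ha
    · exact hmono _ _ _ (le_max_right _ _) hM
    · exact hmono _ _ _ (le_max_left _ _) (hN a ha)

end Stmt5Aux2
section Stmt5Aux3
set_option linter.unusedSectionVars false
variable {α : Type} [DecidableEq α]

lemma reduct_mk {P : NLP α} {I : Interp α} {r : Rule α} (hr : r ∈ P)
    (hneg : ∀ b ∈ r.bodyNeg, b ∉ I.T) :
    (⟨r.head, r.bodyPos, ∃ b ∈ r.bodyNeg, b ∉ I.F⟩ : PosRule α) ∈ reduct P I :=
  ⟨r, hr, hneg, rfl, rfl, Iff.rfl⟩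

lemma omega_T_fwd (P : NLP α) (I : Interp α) :
    ∀ n, ∀ c ∈ (PsiIter (HB P) (reduct P I) n).T,
      ∃ V R, IsStatement P c V R ∧ ∀ b ∈ V, b ∈ I.F := by
  intro n
  induction n with
  | zero => intro c hc; exact absurd hc (by simp [PsiIter])
  | succ n ih =>
    rintro c ⟨hcH, q, hq, hqh, hqU, hbody⟩
    obtain ⟨r, hr, hneg, hh, hbp, hU⟩ := hq
    have hc : c = r.head := by rw [← hqh, hh]
    subst hc
    have hnegF : ∀ b ∈ r.bodyNeg, b ∈ I.F := by
      intro b hb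
      by_contra hbF
      exact hqU (hU.2 ⟨b, hb, hbF⟩)
    have hchoice : ∀ a : α, ∃ V R, a ∈ r.bodyPos →
        (IsStatement P a V R ∧ ∀ b ∈ V, b ∈ I.F) := by
      intro a
      by_cases ha : a ∈ r.bodyPos
      · obtain ⟨V, R, h1, h2⟩ := ih a (hbody a (by rw [hbp]; exact ha))
        exact ⟨V, R, fun _ => ⟨h1, h2⟩⟩
      · exact ⟨∅, ∅, fun h => absurd h ha⟩
    choose v ρ hvρ using hchoice
    by_cases hcase : ∃ a ∈ r.bodyPos, r ∈ ρ a
    · obtain ⟨a, ha, hra⟩ := hcase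
      obtain ⟨hst, hF⟩ := hvρ a ha
      obtain ⟨V', R', hsub, hst'⟩ := hst.sub r hra
      exact ⟨V', R', hst', fun b hb => hF b (hsub hb)⟩
    · push_neg at hcase
      refine ⟨_, _, IsStatement.mk r hr v ρ (fun a ha => (hvρ a ha).1) hcase, ?_⟩
      intro b hb
      rcases Finset.mem_union.1 hb with hb | hb
      · obtain ⟨a, ha, hba⟩ := Finset.mem_biUnion.1 hb
        exact (hvρ a ha).2 b hba
      · exact hnegF b hb

lemma omega_T_bwd (P : NLP α) (I : Interp α) (hdis : Disjoint I.T I.F)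
    {c : α} {V : Finset α} {R : Finset (Rule α)}
    (h : IsStatement P c V R) (hV : ∀ b ∈ V, b ∈ I.F) :
    ∃ n, c ∈ (PsiIter (HB P) (reduct P I) n).T := by
  induction h with
  | mk r hr v ρ hsub hnr ih =>
    have hnegF : ∀ b ∈ r.bodyNeg, b ∈ I.F := fun b hb =>
      hV b (Finset.mem_union_right _ hb)
    have hbody : ∀ a ∈ r.bodyPos, ∃ n, a ∈ (PsiIter (HB P) (reduct P I) n).T := by
      intro a ha
      refine ih a ha (fun b hb => hV b ?_)
      have hbm : b ∈ r.bodyPos.biUnion v := Finset.mem_biUnion.2 ⟨a, ha, hb⟩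
      exact Finset.mem_union_left _ hbm
    obtain ⟨N, hN⟩ := finset_bound
      (p := fun a n => a ∈ (PsiIter (HB P) (reduct P I) n).T)
      (fun a m n hmn hm => psiIter_T_mono (HB P) (reduct P I) hmn hm) hbody
    refine ⟨N + 1, head_mem_HB hr,
      ⟨r.head, r.bodyPos, ∃ b ∈ r.bodyNeg, b ∉ I.F⟩,
      reduct_mk hr (fun b hb => Set.disjoint_right.1 hdis (hnegF b hb)), rfl, ?_, ?_⟩
    · rintro ⟨b, hb, hbF⟩
      exact hbF (hnegF b hb)
    · exact hN

lemma omega_F_fwd (P : NLP α) (I : Interp α)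
    {c : α} {V : Finset α} {R : Finset (Rule α)}
    (h : IsStatement P c V R) (hV : ∀ b ∈ V, b ∉ I.T) :
    ∃ n, c ∉ (PsiIter (HB P) (reduct P I) n).F := by
  induction h with
  | mk r hr v ρ hsub hnr ih =>
    have hbody : ∀ a ∈ r.bodyPos, ∃ n, a ∉ (PsiIter (HB P) (reduct P I) n).F := by
      intro a ha
      refine ih a ha (fun b hb => hV b ?_)
      have hbm : b ∈ r.bodyPos.biUnion v := Finset.mem_biUnion.2 ⟨a, ha, hb⟩
      exact Finset.mem_union_left _ hbm
    obtain ⟨N, hN⟩ := finset_bound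
      (p := fun a n => a ∉ (PsiIter (HB P) (reduct P I) n).F)
      (fun a m n hmn hm hFn => hm (psiIter_F_anti (HB P) (reduct P I) hmn hFn)) hbody
    refine ⟨N + 1, ?_⟩
    rintro ⟨hcH, hall⟩
    obtain ⟨a, ha, haF⟩ := hall ⟨r.head, r.bodyPos, ∃ b ∈ r.bodyNeg, b ∉ I.F⟩
      (reduct_mk hr (fun b hb => hV b (Finset.mem_union_right _ hb))) rfl
    exact hN a ha haF

lemma omega_F_bwd (P : NLP α) (I : Interp α) :
    ∀ n, ∀ c ∈ HB P, (∀ V R, IsStatement P c V R → ∃ b ∈ V, b ∈ I.T) →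
      c ∈ (PsiIter (HB P) (reduct P I) n).F := by
  intro n
  induction n with
  | zero => intro c hc _; simpa [PsiIter] using hc
  | succ n ih =>
    intro c hcH hc
    refine ⟨hcH, ?_⟩
    rintro q ⟨r, hr, hneg, hh, hbp, hU⟩ hqh
    have hch : c = r.head := by rw [← hqh, hh]
    rw [hbp]
    by_contra hcon
    push_neg at hcon
    have hchoice : ∀ a : α, ∃ V R, a ∈ r.bodyPos →
        (IsStatement P a V R ∧ ∀ b ∈ V, b ∉ I.T) := by
      intro a
      by_cases ha : a ∈ r.bodyPos
      · have haH : a ∈ HB P := bodyPos_mem_HB hr ha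
        have h1 : ¬ (∀ V R, IsStatement P a V R → ∃ b ∈ V, b ∈ I.T) :=
          fun hA => hcon a ha (ih a haH hA)
        push_neg at h1
        obtain ⟨V, R, h2, h3⟩ := h1
        exact ⟨V, R, fun _ => ⟨h2, h3⟩⟩
      · exact ⟨∅, ∅, fun h => absurd h ha⟩
    choose v ρ hvρ using hchoice
    by_cases hcase : ∃ a ∈ r.bodyPos, r ∈ ρ a
    · obtain ⟨a, ha, hra⟩ := hcase
      obtain ⟨hst, hT⟩ := hvρ a ha
      obtain ⟨V', R', hsub, hst'⟩ := hst.sub r hra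
      obtain ⟨b, hb, hbT⟩ := hc V' R' (hch ▸ hst')
      exact hT b (hsub hb) hbT
    · push_neg at hcase
      obtain ⟨b, hb, hbT⟩ := hc _ _
        (hch ▸ IsStatement.mk r hr v ρ (fun a ha => (hvρ a ha).1) hcase)
      rcases Finset.mem_union.1 hb with hb | hb
      · obtain ⟨a, ha, hba⟩ := Finset.mem_biUnion.1 hb
        exact (hvρ a ha).2 b hba hbT
      · exact hneg b hb hbT

end Stmt5Aux3
section Stmt5Aux4
set_option linter.unusedSectionVars false
variable {α : Type} [DecidableEq α]

lemma omega_T_eq (P : NLP α) (I : Interp α) (hdis : Disjoint I.T I.F) :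
    (OmegaOp (HB P) P I).T =
      {c | ∃ V R, IsStatement P c V R ∧ ∀ b ∈ V, b ∈ I.F} := by
  ext c
  constructor
  · intro hc
    obtain ⟨s, ⟨n, rfl⟩, hcs⟩ := hc
    exact omega_T_fwd P I n c hcs
  · rintro ⟨V, R, h1, h2⟩
    obtain ⟨n, hn⟩ := omega_T_bwd P I hdis h1 h2
    exact Set.mem_iUnion.2 ⟨n, hn⟩

lemma omega_F_eq (P : NLP α) (I : Interp α) :
    (OmegaOp (HB P) P I).F =
      {c | c ∈ HB P ∧ ∀ V R, IsStatement P c V R → ∃ b ∈ V, b ∈ I.T} := by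
  ext c
  constructor
  · intro hc
    rw [OmegaOp, Set.mem_iInter] at hc
    have hcH : c ∈ HB P := by simpa [PsiIter] using hc 0
    refine ⟨hcH, fun V R hst => ?_⟩
    by_contra hcon
    push_neg at hcon
    obtain ⟨n, hn⟩ := omega_F_fwd P I hst hcon
    exact hn (hc n)
  · rintro ⟨hcH, hall⟩
    rw [OmegaOp, Set.mem_iInter]
    exact fun n => omega_F_bwd P I n c hcH hall

lemma psmodel_char (P : NLP α) (I : Interp α) :
    IsPSModel (HB P) P I ↔ IsInterp (HB P) I ∧
      I.T = {c | ∃ V R, IsStatement P c V R ∧ ∀ b ∈ V, b ∈ I.F} ∧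
      I.F = {c | c ∈ HB P ∧ ∀ V R, IsStatement P c V R → ∃ b ∈ V, b ∈ I.T} := by
  constructor
  · rintro ⟨hint, heq⟩
    refine ⟨hint, ?_, ?_⟩
    · rw [← heq, omega_T_eq P I hint.2.2]; rw [heq]
    · rw [← heq, omega_F_eq P I]; rw [heq]
  · rintro ⟨hint, hT, hF⟩
    refine ⟨hint, ?_⟩
    have h1 : (OmegaOp (HB P) P I).T = I.T := by
      rw [omega_T_eq P I hint.2.2, hT]
    have h2 : (OmegaOp (HB P) P I).F = I.F := by
      rw [omega_F_eq P I, hF]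
    cases hI : I with
    | mk T F =>
      rw [hI] at h1 h2
      rw [show OmegaOp (HB P) P ⟨T, F⟩ =
        ⟨(OmegaOp (HB P) P ⟨T, F⟩).T, (OmegaOp (HB P) P ⟨T, F⟩).F⟩ from rfl, h1, h2]

end Stmt5Aux4
section Stmt5Aux5
set_option linter.unusedSectionVars false
variable {α : Type} [DecidableEq α]

lemma mem_argsOf {P : NLP α} {c : α} :
    c ∈ argsOf P ↔ c ∈ HB P ∧ IsArg P c := by
  classical
  simp [argsOf]

lemma IsStatement.conc_mem_args {P : NLP α} {c : α} {V : Finset α}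
    {R : Finset (Rule α)} (h : IsStatement P c V R) : c ∈ argsOf P :=
  mem_argsOf.2 ⟨h.conc_mem_HB, V, R, h⟩

lemma argsOf_subset_HB (P : NLP α) : argsOf P ⊆ HB P := by
  classical
  exact Finset.filter_subset _ _

lemma exists_stmt_of_arg {P : NLP α} {a : α} (ha : a ∈ argsOf P) :
    ∃ V R, IsStatement P a V R := (mem_argsOf.1 ha).2

lemma claim_in (P : NLP α) (L : α → Lab) {a : α} (ha : a ∈ argsOf P) :
    (∀ B, (setafOf P).att B a → ∃ b ∈ B, L b = Lab.out) ↔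
    (∃ V R, IsStatement P a V R ∧ ∀ b ∈ V, b ∉ argsOf P ∨ L b = Lab.out) := by
  classical
  constructor
  · intro h
    set C := (argsOf P).filter (fun b => L b ≠ Lab.out) with hCdef
    by_cases hC : HitsVul P C a
    · obtain ⟨B, hBC, hhit, hmin⟩ := exists_min_hitter P a C hC
      have hatt : (setafOf P).att B a :=
        ⟨hBC.trans (Finset.filter_subset _ _), ha, hhit, hmin⟩
      obtain ⟨b, hb, hbo⟩ := h B hatt
      have := (Finset.mem_filter.1 (hBC hb)).2
      exact absurd hbo this
    · rw [HitsVul] at hC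
      push_neg at hC
      obtain ⟨V, R, hst, hVC⟩ := hC
      refine ⟨V, R, hst, fun b hb => ?_⟩
      have hbC : b ∉ C := fun hbC => hVC b hbC hb
      rw [hCdef, Finset.mem_filter] at hbC
      push_neg at hbC
      by_cases hbarg : b ∈ argsOf P
      · exact Or.inr (hbC hbarg)
      · exact Or.inl hbarg
  · rintro ⟨V, R, hst, hV⟩ B ⟨hBargs, _, hhit, _⟩
    obtain ⟨b, hbB, hbV⟩ := hhit V R hst
    rcases hV b hbV with hb | hb
    · exact absurd (hBargs hbB) hb
    · exact ⟨b, hbB, hb⟩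

lemma claim_out (P : NLP α) (L : α → Lab) {a : α} (ha : a ∈ argsOf P) :
    (∃ B, (setafOf P).att B a ∧ ∀ b ∈ B, L b = Lab.inn) ↔
    (∀ V R, IsStatement P a V R → ∃ b ∈ V, b ∈ argsOf P ∧ L b = Lab.inn) := by
  classical
  constructor
  · rintro ⟨B, ⟨hBargs, _, hhit, _⟩, hinn⟩ V R hst
    obtain ⟨b, hbB, hbV⟩ := hhit V R hst
    exact ⟨b, hbV, hBargs hbB, hinn b hbB⟩
  · intro h
    set C := (argsOf P).filter (fun b => L b = Lab.inn) with hCdef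
    have hC : HitsVul P C a := by
      intro V R hst
      obtain ⟨b, hbV, hbarg, hbinn⟩ := h V R hst
      exact ⟨b, Finset.mem_filter.2 ⟨hbarg, hbinn⟩, hbV⟩
    obtain ⟨B, hBC, hhit, hmin⟩ := exists_min_hitter P a C hC
    refine ⟨B, ⟨hBC.trans (Finset.filter_subset _ _), ha, hhit, hmin⟩,
      fun b hb => (Finset.mem_filter.1 (hBC hb)).2⟩

lemma complete_char (P : NLP α) (L : α → Lab) :
    CompleteLab (setafOf P) L ↔
    ∀ a ∈ argsOf P,
      ((L a = Lab.inn) ↔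
        ∃ V R, IsStatement P a V R ∧ ∀ b ∈ V, b ∉ argsOf P ∨ L b = Lab.out) ∧
      ((L a = Lab.out) ↔
        ∀ V R, IsStatement P a V R → ∃ b ∈ V, b ∈ argsOf P ∧ L b = Lab.inn) := by
  have hargs : (setafOf P).args = argsOf P := rfl
  constructor
  · rintro ⟨hadm, hund⟩ a ha
    have hadma := hadm a (by rw [hargs]; exact ha)
    constructor
    · constructor
      · intro hinn
        exact (claim_in P L ha).1 (hadma.1 hinn)
      · intro hPin
        obtain ⟨V, R, hst, hV⟩ := hPin
        cases hLa : L a with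
        | inn => rfl
        | out =>
          obtain ⟨B, hatt, hinn⟩ := hadma.2 hLa
          obtain ⟨b, hbB, hbV⟩ := hatt.2.2.1 V R hst
          rcases hV b hbV with hb | hb
          · exact absurd (hatt.1 hbB) hb
          · rw [hinn b hbB] at hb; exact absurd hb (by simp)
        | und =>
          obtain ⟨⟨B, hatt, hnoout⟩, _⟩ := hund a (by rw [hargs]; exact ha) hLa
          obtain ⟨b, hbB, hbV⟩ := hatt.2.2.1 V R hst
          rcases hV b hbV with hb | hb
          · exact absurd (hatt.1 hbB) hb
          · exact absurd hb (hnoout b hbB)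
    · constructor
      · intro hout
        obtain ⟨B, hatt, hinn⟩ := hadma.2 hout
        exact (claim_out P L ha).1 ⟨B, hatt, hinn⟩
      · intro hPout
        classical
        set C := (argsOf P).filter (fun b => L b = Lab.inn) with hCdef
        have hC : HitsVul P C a := by
          intro V R hst
          obtain ⟨b, hbV, hbarg, hbinn⟩ := hPout V R hst
          exact ⟨b, Finset.mem_filter.2 ⟨hbarg, hbinn⟩, hbV⟩
        obtain ⟨B, hBC, hhit, hmin⟩ := exists_min_hitter P a C hC
        have hatt : (setafOf P).att B a :=
          ⟨hBC.trans (Finset.filter_subset _ _), ha, hhit, hmin⟩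
        cases hLa : L a with
        | out => rfl
        | inn =>
          obtain ⟨b, hbB, hbout⟩ := hadma.1 hLa B hatt
          have := (Finset.mem_filter.1 (hBC hbB)).2
          rw [this] at hbout; exact absurd hbout (by simp)
        | und =>
          obtain ⟨_, h2⟩ := hund a (by rw [hargs]; exact ha) hLa
          obtain ⟨b, hbB, hbninn⟩ := h2 B hatt
          exact absurd (Finset.mem_filter.1 (hBC hbB)).2 hbninn
  · intro h
    have hadm : AdmissibleLab (setafOf P) L := by
      intro a ha
      rw [hargs] at ha
      constructor
      · intro hinn
        exact (claim_in P L ha).2 ((h a ha).1.1 hinn)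
      · intro hout
        exact (claim_out P L ha).2 ((h a ha).2.1 hout)
    refine ⟨hadm, ?_⟩
    intro a ha hund
    rw [hargs] at ha
    have hninn : L a ≠ Lab.inn := by rw [hund]; simp
    have hnout : L a ≠ Lab.out := by rw [hund]; simp
    constructor
    · have : ¬ ∀ B, (setafOf P).att B a → ∃ b ∈ B, L b = Lab.out := by
        rw [claim_in P L ha]
        exact fun hc => hninn ((h a ha).1.2 hc)
      push_neg at this
      obtain ⟨B, hatt, hno⟩ := this
      exact ⟨B, hatt, hno⟩
    · have : ¬ ∃ B, (setafOf P).att B a ∧ ∀ b ∈ B, L b = Lab.inn := by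
        rw [claim_out P L ha]
        exact fun hc => hnout ((h a ha).2.2 hc)
      push_neg at this
      intro B hatt
      obtain ⟨b, hbB, hb⟩ := this B hatt
      exact ⟨b, hbB, hb⟩

end Stmt5Aux5
section Stmt5Aux6
set_option linter.unusedSectionVars false
variable {α : Type} [DecidableEq α]

lemma memT_iff {P : NLP α} {L : α → Lab} {b : α} :
    b ∈ (L2I P L).T ↔ (b ∈ argsOf P ∧ L b = Lab.inn) := by
  simp only [L2I, Set.mem_setOf_eq]
  exact ⟨fun h => ⟨h.2.1, h.2.2⟩, fun h => ⟨argsOf_subset_HB P h.1, h.1, h.2⟩⟩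

lemma memF_iff {P : NLP α} {L : α → Lab} {b : α} (hb : b ∈ HB P) :
    b ∈ (L2I P L).F ↔ (b ∉ argsOf P ∨ L b = Lab.out) := by
  simp only [L2I, Set.mem_setOf_eq]
  constructor
  · rintro ⟨-, h | ⟨-, h⟩⟩
    · exact Or.inl h
    · exact Or.inr h
  · rintro (h | h)
    · exact ⟨hb, Or.inl h⟩
    · by_cases harg : b ∈ argsOf P
      · exact ⟨hb, Or.inr ⟨harg, h⟩⟩
      · exact ⟨hb, Or.inl harg⟩

lemma L2I_isInterp (P : NLP α) (L : α → Lab) : IsInterp (HB P) (L2I P L) := by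
  refine ⟨fun c hc => hc.1, fun c hc => hc.1, Set.disjoint_left.2 ?_⟩
  rintro c ⟨hH, harg, hinn⟩ ⟨-, hna | ⟨-, hout⟩⟩
  · exact hna harg
  · rw [hinn] at hout; exact absurd hout (by simp)

lemma complete_iff_ps (P : NLP α) (L : α → Lab) :
    CompleteLab (setafOf P) L ↔ IsPSModel (HB P) P (L2I P L) := by
  rw [psmodel_char, complete_char]
  constructor
  · intro h
    refine ⟨L2I_isInterp P L, ?_, ?_⟩
    · ext c
      rw [memT_iff, Set.mem_setOf_eq]
      constructor
      · rintro ⟨harg, hinn⟩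
        obtain ⟨V, R, hst, hV⟩ := (h c harg).1.1 hinn
        exact ⟨V, R, hst, fun b hb =>
          (memF_iff (hst.vul_mem_HB b hb)).2 (hV b hb)⟩
      · rintro ⟨V, R, hst, hV⟩
        have harg := hst.conc_mem_args
        refine ⟨harg, (h c harg).1.2 ⟨V, R, hst, fun b hb =>
          (memF_iff (hst.vul_mem_HB b hb)).1 (hV b hb)⟩⟩
    · ext c
      simp only [Set.mem_setOf_eq]
      constructor
      · intro hcF
        have hcH : c ∈ HB P := hcF.1
        refine ⟨hcH, fun V R hst => ?_⟩
        have harg := hst.conc_mem_args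
        rcases (memF_iff hcH).1 hcF with hna | hout
        · exact absurd harg hna
        · obtain ⟨b, hbV, hbarg, hbinn⟩ := (h c harg).2.1 hout V R hst
          exact ⟨b, hbV, memT_iff.2 ⟨hbarg, hbinn⟩⟩
      · rintro ⟨hcH, hall⟩
        refine (memF_iff hcH).2 ?_
        by_cases harg : c ∈ argsOf P
        · refine Or.inr ((h c harg).2.2 fun V R hst => ?_)
          obtain ⟨b, hbV, hbT⟩ := hall V R hst
          exact ⟨b, hbV, memT_iff.1 hbT⟩
        · exact Or.inl harg
  · rintro ⟨-, hT, hF⟩ a ha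
    have haH : a ∈ HB P := argsOf_subset_HB P ha
    constructor
    · constructor
      · intro hinn
        have : a ∈ (L2I P L).T := memT_iff.2 ⟨ha, hinn⟩
        rw [hT, Set.mem_setOf_eq] at this
        obtain ⟨V, R, hst, hV⟩ := this
        exact ⟨V, R, hst, fun b hb =>
          (memF_iff (hst.vul_mem_HB b hb)).1 (hV b hb)⟩
      · rintro ⟨V, R, hst, hV⟩
        have : a ∈ (L2I P L).T := by
          rw [hT, Set.mem_setOf_eq]
          exact ⟨V, R, hst, fun b hb =>
            (memF_iff (hst.vul_mem_HB b hb)).2 (hV b hb)⟩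
        exact (memT_iff.1 this).2
    · constructor
      · intro hout
        have : a ∈ (L2I P L).F := (memF_iff haH).2 (Or.inr hout)
        rw [hF, Set.mem_setOf_eq] at this
        intro V R hst
        obtain ⟨b, hbV, hbT⟩ := this.2 V R hst
        exact ⟨b, hbV, memT_iff.1 hbT⟩
      · intro hPout
        have : a ∈ (L2I P L).F := by
          rw [hF, Set.mem_setOf_eq]
          refine ⟨haH, fun V R hst => ?_⟩
          obtain ⟨b, hbV, hbarg, hbinn⟩ := hPout V R hst
          exact ⟨b, hbV, memT_iff.2 ⟨hbarg, hbinn⟩⟩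
        rcases (memF_iff haH).1 this with hna | hout
        · exact absurd ha hna
        · exact hout

lemma labIn_eq (P : NLP α) (L : α → Lab) :
    labIn (setafOf P) L = (L2I P L).T := by
  ext c
  rw [memT_iff]
  exact Iff.rfl

lemma Interp.ext' {I J : Interp α} (hT : I.T = J.T) (hF : I.F = J.F) : I = J := by
  cases I; cases J; cases hT; cases hF; rfl

lemma I2L_inn_iff {I : Interp α} {c : α} : I2L I c = Lab.inn ↔ c ∈ I.T := by
  unfold I2L
  split_ifs with h1 h2 <;> simp_all

lemma L2I_I2L (P : NLP α) {J : Interp α} (hJ : IsPSModel (HB P) P J) :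
    L2I P (I2L J) = J := by
  obtain ⟨hint, hTeq, hFeq⟩ := (psmodel_char P J).1 hJ
  have hTargs : ∀ c ∈ J.T, c ∈ argsOf P := by
    intro c hc
    rw [hTeq, Set.mem_setOf_eq] at hc
    obtain ⟨V, R, hst, -⟩ := hc
    exact hst.conc_mem_args
  have hdis := hint.2.2
  refine Interp.ext' ?_ ?_
  · ext c
    rw [memT_iff, I2L_inn_iff]
    exact ⟨fun h => h.2, fun h => ⟨hTargs c h, h⟩⟩
  · ext c
    constructor
    · rintro ⟨hcH, hd⟩
      rcases hd with hna | ⟨harg, hout⟩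
      · rw [hFeq]
        exact ⟨hcH, fun V R hst => absurd hst.conc_mem_args hna⟩
      · unfold I2L at hout
        split_ifs at hout with h1 h2
        exact h2
    · intro hcF
      have hcH : c ∈ HB P := hint.2.1 hcF
      refine ⟨hcH, ?_⟩
      by_cases harg : c ∈ argsOf P
      · refine Or.inr ⟨harg, ?_⟩
        unfold I2L
        rw [if_neg (fun hT => (Set.disjoint_left.1 hdis hT) hcF), if_pos hcF]
      · exact Or.inl harg

end Stmt5Aux6

theorem stmt5_aux (P : NLP α) (L : α → Lab) :
    PreferredLab (setafOf P) L ↔ IsRegularModel (HB P) P (L2I P L) := by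
  constructor
  · rintro ⟨hcomp, hmax⟩
    refine ⟨(complete_iff_ps P L).1 hcomp, ?_⟩
    intro J hJ hsub
    have hc' : CompleteLab (setafOf P) (I2L J) := by
      rw [complete_iff_ps, L2I_I2L P hJ]
      exact hJ
    refine hmax (I2L J) hc' ?_
    rw [labIn_eq, labIn_eq, L2I_I2L P hJ]
    exact hsub
  · rintro ⟨hps, hmax⟩
    refine ⟨(complete_iff_ps P L).2 hps, ?_⟩
    intro L' hc' hsub
    refine hmax (L2I P L') ((complete_iff_ps P L').1 hc') ?_
    rw [← labIn_eq, ← labIn_eq]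
    exact hsub
theorem stmt5 (P : NLP α) (L : α → Lab) :
    PreferredLab (setafOf P) L ↔ IsRegularModel (HB P) P (L2I P L) := by
  exact stmt5_aux P L
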